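/- Suppose the Markov kernel P satisfies PE(V, c, α, b, C) with C = {x : V(x) ≤ d} a sublevel set, that every sublevel set {x : V(x) ≤ r} is small, and that V(X) has bounded upward jumps off C: there exists K < ∞ such that P(x, {y : V(y) > V(x) + K}) = 0 for every x ∉ C. Then the chain is tame with respect to V; indeed it is tamed by a taming function of the form F(z) = ⌈λ z^{1−α}⌉ for z above a suitable level d' (and F(z) = 1 below), with the geometric drift coefficient β of the subsampled chain satisfying log β < (1−α)^{-1}·log α. -/

import Mathlib

open MeasureTheory ProbabilityTheory ENNReal Set

/-- `n`-fold composition power of a kernel. -/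
noncomputable def kpow {𝓧 : Type*} [MeasurableSpace 𝓧]
    (P : ProbabilityTheory.Kernel 𝓧 𝓧) : ℕ → ProbabilityTheory.Kernel 𝓧 𝓧
  | 0 => ProbabilityTheory.Kernel.id
  | n + 1 => P.comp (kpow P n)

/-- The taming function `F(z) = ⌈λ z^δ⌉` for `z > d'` and `F(z) = 1` for `z ≤ d'`. -/
noncomputable def tamingF (lam δ d' : ℝ) (z : ℝ) : ℕ :=
  if z ≤ d' then 1 else ⌈lam * z ^ δ⌉₊

/-- The bound `δ⁻¹·log(1−δ)`, interpreted as `−1` when `δ = 0`. -/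
noncomputable def tameBound (δ : ℝ) : ℝ :=
  if δ = 0 then -1 else δ⁻¹ * Real.log (1 - δ)

/-- `C` is a small set for the kernel `P`. -/
def IsSmallSet {𝓧 : Type*} [MeasurableSpace 𝓧]
    (P : ProbabilityTheory.Kernel 𝓧 𝓧) (C : Set 𝓧) : Prop :=
  ∃ m : ℕ, 0 < m ∧ ∃ ε : ℝ, 0 < ε ∧ ε ≤ 1 ∧ ∃ ν : Measure 𝓧, IsProbabilityMeasure ν ∧
    ∀ x ∈ C, ∀ E : Set 𝓧, MeasurableSet E → ENNReal.ofReal ε * ν E ≤ (kpow P m) x E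

/-- The chain with kernel `P` is *tame* with respect to the scale function `V`. -/
def IsTame {𝓧 : Type*} [MeasurableSpace 𝓧]
    (P : ProbabilityTheory.Kernel 𝓧 𝓧) (V : 𝓧 → ℝ) : Prop :=
  ∃ d' : ℝ, 1 ≤ d' ∧ IsSmallSet P {x | V x ≤ d'} ∧
    ∃ lam : ℝ, 0 < lam ∧ ∃ δ ∈ Set.Ico (0 : ℝ) 1, ∃ β ∈ Set.Ioo (0 : ℝ) 1, ∃ b' : ℝ,
      Real.log β < tameBound δ ∧
      ∀ x, ∫⁻ y, ENNReal.ofReal (V y) ∂((kpow P (tamingF lam δ d' (V x))) x)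
        ≤ ENNReal.ofReal (β * V x + Set.indicator {x' | V x' ≤ d'} (fun _ => b') x)

section AuxTame

variable {𝓧 : Type*} [MeasurableSpace 𝓧]

lemma kpow_markov (P : Kernel 𝓧 𝓧) [IsMarkovKernel P] :
    ∀ n, IsMarkovKernel (kpow P n)
  | 0 => by rw [kpow]; infer_instance
  | n + 1 => by
      haveI := kpow_markov P n
      rw [kpow]; infer_instance

lemma kpow_succ' (P : Kernel 𝓧 𝓧) [IsMarkovKernel P] (n : ℕ) :
    kpow P (n + 1) = (kpow P n).comp P := by
  induction n with
  | zero => show P ∘ₖ Kernel.id = Kernel.id ∘ₖ P; rw [Kernel.comp_id, Kernel.id_comp]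
  | succ n ih =>
      haveI := kpow_markov P n
      calc kpow P (n + 2) = P.comp (kpow P (n + 1)) := rfl
        _ = P.comp ((kpow P n).comp P) := by rw [ih]
        _ = (P.comp (kpow P n)).comp P := (Kernel.comp_assoc P (kpow P n) P).symm
        _ = (kpow P (n + 1)).comp P := rfl

noncomputable def subK (P : Kernel 𝓧 𝓧) {S : Set 𝓧} (hS : MeasurableSet S) :
    ℕ → Kernel 𝓧 𝓧
  | 0 => Kernel.id
  | n + 1 => (subK P hS n).comp (P.restrict hS)

lemma subK_finite (P : Kernel 𝓧 𝓧) [IsFiniteKernel P] {S : Set 𝓧} (hS : MeasurableSet S) :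
    ∀ n, IsFiniteKernel (subK P hS n)
  | 0 => by rw [subK]; infer_instance
  | n + 1 => by
      haveI := subK_finite P hS n
      rw [subK]; infer_instance

end AuxTame

set_option maxHeartbeats 2000000 in
lemma tame_main {𝓧 : Type*} [MeasurableSpace 𝓧]
    (P : Kernel 𝓧 𝓧) [IsMarkovKernel P]
    (V : 𝓧 → ℝ) (hVmeas : Measurable V) (hV1 : ∀ x, 1 ≤ V x)
    (c α b d : ℝ) (hα : α ∈ Set.Ioo (0 : ℝ) 1) (hc : 0 < c) (hb : 0 < b)
    (hPE : ∀ x, ∫⁻ y, ENNReal.ofReal (V y) ∂(P x)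
      ≤ ENNReal.ofReal (V x - c * V x ^ α
          + Set.indicator {x' | V x' ≤ d} (fun _ => b) x))
    (K : ℝ) (hK : 0 ≤ K) (hjump : ∀ x, d < V x → P x {y | V x + K < V y} = 0) :
    ∃ d' : ℝ, 1 ≤ d' ∧ ∃ lam : ℝ, 0 < lam ∧ ∃ β ∈ Set.Ioo (0 : ℝ) 1, ∃ b' : ℝ,
      Real.log β < (1 - α)⁻¹ * Real.log α ∧
      ∀ x, ∫⁻ y, ENNReal.ofReal (V y) ∂((kpow P (tamingF lam (1 - α) d' (V x))) x)
        ≤ ENNReal.ofReal (β * V x + Set.indicator {x' | V x' ≤ d'} (fun _ => b') x) := by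
  obtain ⟨hα0, hα1⟩ := hα
  have h1a : 0 < 1 - α := by linarith
  obtain ⟨c₁, hc₁def⟩ : ∃ c₁ : ℝ, c₁ = c * (1 - α) := ⟨_, rfl⟩
  have hc₁ : 0 < c₁ := hc₁def ▸ mul_pos hc h1a
  obtain ⟨β, hβdef⟩ : ∃ β : ℝ, β = Real.exp ((1 - α)⁻¹ * Real.log α) / 2 := ⟨_, rfl⟩
  have hβpos : 0 < β := by rw [hβdef]; positivity
  have hβ1 : β < 1 := by
    have h1 : Real.exp ((1 - α)⁻¹ * Real.log α) < 1 := by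
      apply Real.exp_lt_one_iff.mpr
      have : Real.log α < 0 := Real.log_neg hα0 hα1
      have : 0 < (1 - α)⁻¹ := by positivity
      nlinarith
    rw [hβdef]; linarith
  have hlogβ : Real.log β < (1 - α)⁻¹ * Real.log α := by
    rw [hβdef, Real.log_div (Real.exp_ne_zero _) two_ne_zero, Real.log_exp]
    have : 0 < Real.log 2 := Real.log_pos one_lt_two
    linarith
  obtain ⟨lam, hlamdef⟩ : ∃ lam : ℝ, lam = 2 / (c₁ * β) := ⟨_, rfl⟩
  have hlam : 0 < lam := by rw [hlamdef]; positivity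
  obtain ⟨Q, hQdef⟩ : ∃ Q : ℝ, Q = K / c₁ + lam * b := ⟨_, rfl⟩
  have hQ : 0 < Q := by
    rw [hQdef]
    have : 0 ≤ K / c₁ := by positivity
    nlinarith [mul_pos hlam hb]
  obtain ⟨d₁, hd₁def⟩ : ∃ d₁ : ℝ, d₁ = max d (max 1 (c ^ (1 - α)⁻¹)) := ⟨_, rfl⟩
  have hd₁d : d ≤ d₁ := hd₁def ▸ le_max_left _ _
  have hd₁1 : (1 : ℝ) ≤ d₁ := hd₁def ▸ le_trans (le_max_left _ _) (le_max_right _ _)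
  have hcd₁ : ∀ v : ℝ, d₁ < v → c < v ^ (1 - α) := by
    intro v hv
    have hcv : c ^ (1 - α)⁻¹ < v :=
      lt_of_le_of_lt (hd₁def ▸ le_trans (le_max_right _ _) (le_max_right _ _) :
        c ^ (1 - α)⁻¹ ≤ d₁) hv
    have h0 : (0 : ℝ) ≤ c ^ (1 - α)⁻¹ := Real.rpow_nonneg hc.le _
    calc c = (c ^ (1 - α)⁻¹) ^ (1 - α) := by
          rw [← Real.rpow_mul hc.le, inv_mul_cancel₀ h1a.ne', Real.rpow_one]
      _ < v ^ (1 - α) := Real.rpow_lt_rpow h0 hcv h1a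
  obtain ⟨d', hd'def⟩ :
      ∃ d' : ℝ, d' = max (max d₁ 1) (max ((4 * Q / β) ^ α⁻¹) (4 * (d₁ + b) / β)) := ⟨_, rfl⟩
  have hd'1 : (1 : ℝ) ≤ d' := hd'def ▸ le_trans (le_max_right _ _) (le_max_left _ _)
  have hd'd₁ : d₁ ≤ d' := hd'def ▸ le_trans (le_max_left _ _) (le_max_left _ _)
  obtain ⟨b', hb'def⟩ : ∃ b' : ℝ, b' = d' + b := ⟨_, rfl⟩
  -- the purely real final estimate
  have hreal : ∀ v : ℝ, d' < v →
      (v + (⌈lam * v ^ (1 - α)⌉₊ : ℝ) * K) * (v ^ (1 - α) / (c₁ * ⌈lam * v ^ (1 - α)⌉₊))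
        + (d₁ + (⌈lam * v ^ (1 - α)⌉₊ : ℝ) * b) ≤ β * v := by
    intro v hv
    have hv0 : (0 : ℝ) < v := lt_of_lt_of_le one_pos (le_trans hd'1 hv.le)
    have hw : (0 : ℝ) < v ^ (1 - α) := Real.rpow_pos_of_pos hv0 _
    obtain ⟨w, hwdef⟩ : ∃ w : ℝ, w = v ^ (1 - α) := ⟨_, rfl⟩
    rw [← hwdef]
    have hw : (0 : ℝ) < w := hwdef ▸ hw
    obtain ⟨n, hndef⟩ : ∃ n : ℕ, n = ⌈lam * w⌉₊ := ⟨_, rfl⟩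
    rw [← hndef]
    have hlw : 0 < lam * w := by positivity
    have hnpos : (0 : ℝ) < (n : ℝ) := by
      rw [hndef]; exact_mod_cast Nat.cast_pos.mpr (Nat.ceil_pos.mpr hlw)
    have hn1 : lam * w ≤ (n : ℝ) := hndef ▸ Nat.le_ceil _
    have hn2 : (n : ℝ) ≤ lam * w + 1 := hndef ▸ (Nat.ceil_lt_add_one hlw.le).le
    have hsplit : v ^ α * w = v := by
      rw [hwdef, ← Real.rpow_add hv0]
      norm_num
    have hAA : Q * w ≤ β / 4 * v := by
      have h1 : (4 * Q / β) ^ α⁻¹ < v :=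
        lt_of_le_of_lt (hd'def ▸ le_trans (le_max_left _ _) (le_max_right _ _) :
          (4 * Q / β) ^ α⁻¹ ≤ d') hv
      have hvα : 4 * Q / β < v ^ α := by
        calc 4 * Q / β = ((4 * Q / β) ^ α⁻¹) ^ α := by
              rw [← Real.rpow_mul (by positivity), inv_mul_cancel₀ hα0.ne', Real.rpow_one]
          _ < v ^ α := Real.rpow_lt_rpow (by positivity) h1 hα0
      have h2 : 4 * Q / β * w < v ^ α * w := by
        exact mul_lt_mul_of_pos_right hvα hw
      have h3 : Q * w = β / 4 * (4 * Q / β * w) := by field_simp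
      rw [h3, hsplit] at *
      nlinarith
    have hBB : d₁ + b ≤ β / 4 * v := by
      have h1 : 4 * (d₁ + b) / β ≤ d' := hd'def ▸ le_trans (le_max_right _ _) (le_max_right _ _)
      have h2 : 4 * (d₁ + b) / β < v := lt_of_le_of_lt h1 hv
      have h3 : d₁ + b = β / 4 * (4 * (d₁ + b) / β) := by field_simp
      rw [h3]
      nlinarith
    have hclam : c₁ * lam = 2 / β := by rw [hlamdef]; field_simp
    have hterm1 : v * w / (c₁ * n) ≤ β / 2 * v := by
      have h1 : 2 / β * w ≤ c₁ * n := by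
        calc 2 / β * w = c₁ * lam * w := by rw [hclam]
          _ = c₁ * (lam * w) := by ring
          _ ≤ c₁ * n := mul_le_mul_of_nonneg_left hn1 hc₁.le
      have h2 : (0 : ℝ) < 2 / β * w := by positivity
      calc v * w / (c₁ * n) ≤ v * w / (2 / β * w) :=
            div_le_div_of_nonneg_left (by positivity) h2 h1
        _ = β / 2 * v := by field_simp
    have hexpand : (v + (n : ℝ) * K) * (w / (c₁ * n)) = v * w / (c₁ * n) + K * w / c₁ := by
      field_simp
    have hnb : (n : ℝ) * b ≤ lam * b * w + b := by nlinarith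
    have hQw : K * w / c₁ + lam * b * w = Q * w := by rw [hQdef]; field_simp
    rw [hexpand]
    linarith [hAA, hBB, hterm1, hnb, hQw]
  -- measurable auxiliary functions
  have hgV : Measurable fun y => ENNReal.ofReal (V y) := ENNReal.measurable_ofReal.comp hVmeas
  have hgU : Measurable fun y => ENNReal.ofReal (V y ^ (1 - α)) :=
    ENNReal.measurable_ofReal.comp ((Real.continuous_rpow_const h1a.le).measurable.comp hVmeas)
  have hO : MeasurableSet {x : 𝓧 | d₁ < V x} := measurableSet_lt measurable_const hVmeas
  have hrmass : ∀ (n : ℕ) (x : 𝓧), subK P hO (n + 1) x univ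
      = ∫⁻ z in {x : 𝓧 | d₁ < V x}, subK P hO n z univ ∂(P x) := by
    intro n x
    rw [show subK P hO (n + 1) = (subK P hO n).comp (P.restrict hO) from rfl,
      Kernel.comp_apply' _ _ _ MeasurableSet.univ, Kernel.restrict_apply]
  have hrmeas : ∀ n : ℕ, Measurable fun x => subK P hO n x univ := fun n =>
    Kernel.measurable_coe _ MeasurableSet.univ
  have hrfin : ∀ n, IsFiniteKernel (subK P hO n) := subK_finite P hO
  have hkM : ∀ n, IsMarkovKernel (kpow P n) := kpow_markov P
  have hkfirst : ∀ (n : ℕ) (x : 𝓧) {g : 𝓧 → ℝ≥0∞}, Measurable g →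
      ∫⁻ y, g y ∂(kpow P (n + 1) x) = ∫⁻ z, (∫⁻ y, g y ∂(kpow P n z)) ∂(P x) := by
    intro n x g hg
    rw [kpow_succ' P n, Kernel.lintegral_comp _ _ _ hg]
  have hrfirstU : ∀ (n : ℕ) (x : 𝓧),
      ∫⁻ y, ENNReal.ofReal (V y ^ (1 - α)) ∂(subK P hO (n + 1) x)
        = ∫⁻ z in {x : 𝓧 | d₁ < V x},
            (∫⁻ y, ENNReal.ofReal (V y ^ (1 - α)) ∂(subK P hO n z)) ∂(P x) := by
    intro n x
    rw [show subK P hO (n + 1) = (subK P hO n).comp (P.restrict hO) from rfl,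
      Kernel.lintegral_comp _ _ _ hgU, Kernel.restrict_apply]
  have hVz0 : ∀ z : 𝓧, (0 : ℝ) ≤ V z := fun z => le_trans zero_le_one (hV1 z)
  have hindle : ∀ z : 𝓧, Set.indicator {x' : 𝓧 | V x' ≤ d} (fun _ => b) z ≤ b := by
    intro z
    classical
    by_cases hz : z ∈ {x' : 𝓧 | V x' ≤ d}
    · rw [Set.indicator_of_mem hz]
    · rw [Set.indicator_of_notMem hz]; exact hb.le
  -- universal growth bound
  have hgrow : ∀ (n : ℕ) (x : 𝓧), ∫⁻ y, ENNReal.ofReal (V y) ∂(kpow P n x)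
      ≤ ENNReal.ofReal (V x + (n : ℝ) * b) := by
    intro n
    induction n with
    | zero =>
        intro x
        rw [show kpow P 0 = Kernel.id from rfl, Kernel.id_apply, lintegral_dirac' _ hgV]
        refine ENNReal.ofReal_le_ofReal ?_
        norm_num
    | succ n ih =>
        intro x
        push_cast
        rw [hkfirst n x hgV]
        calc ∫⁻ z, (∫⁻ y, ENNReal.ofReal (V y) ∂(kpow P n z)) ∂(P x)
            ≤ ∫⁻ z, (ENNReal.ofReal (V z) + ENNReal.ofReal ((n : ℝ) * b)) ∂(P x) := by
              refine lintegral_mono fun z => ?_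
              refine le_trans (ih z) ?_
              exact le_of_eq (ENNReal.ofReal_add (hVz0 z)
                (mul_nonneg (Nat.cast_nonneg n) hb.le))
          _ = (∫⁻ z, ENNReal.ofReal (V z) ∂(P x)) + ENNReal.ofReal ((n : ℝ) * b) := by
              rw [lintegral_add_right _ measurable_const, lintegral_const,
                measure_univ, mul_one]
          _ ≤ ENNReal.ofReal (V x + b) + ENNReal.ofReal ((n : ℝ) * b) := by
              refine add_le_add_left (le_trans (hPE x) (ENNReal.ofReal_le_ofReal ?_)) _
              have h1 : 0 ≤ c * V x ^ α :=
                mul_nonneg hc.le (Real.rpow_nonneg (hVz0 x) _)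
              linarith [hindle x]
          _ = ENNReal.ofReal (V x + ((n : ℝ) + 1) * b) := by
              rw [← ENNReal.ofReal_add (by nlinarith [hV1 x])
                (mul_nonneg (Nat.cast_nonneg n) hb.le)]
              congr 1
              ring
  -- a.e. bounded jumps
  have hae : ∀ x : 𝓧, d₁ < V x → ∀ᵐ z ∂(P x), V z ≤ V x + K := by
    intro x hx
    rw [ae_iff]
    have hset : {z : 𝓧 | ¬ V z ≤ V x + K} = {y : 𝓧 | V x + K < V y} := by
      ext z; simp [not_le]
    rw [hset]
    exact hjump x (lt_of_le_of_lt hd₁d hx)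
  -- Claim A : value bound before entering the sublevel set
  have hA : ∀ (n : ℕ) (x : 𝓧), d₁ < V x →
      ∫⁻ y, ENNReal.ofReal (V y) ∂(kpow P n x)
        ≤ ENNReal.ofReal (V x + (n : ℝ) * K) * subK P hO n x univ
          + ENNReal.ofReal (d₁ + (n : ℝ) * b) := by
    intro n
    induction n with
    | zero =>
        intro x hx
        rw [show kpow P 0 = Kernel.id from rfl, Kernel.id_apply, lintegral_dirac' _ hgV]
        have h1 : subK P hO 0 x univ = 1 := by
          rw [show subK P hO 0 = Kernel.id from rfl, Kernel.id_apply]; simp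
        rw [h1, mul_one]
        refine le_trans (ENNReal.ofReal_le_ofReal ?_) le_self_add
        norm_num
    | succ n ih =>
        intro x hx
        push_cast
        have hFmeas : Measurable fun z => ∫⁻ y, ENNReal.ofReal (V y) ∂(kpow P n z) := by
          haveI := hkM n
          exact hgV.lintegral_kernel
        rw [hkfirst n x hgV,
          ← lintegral_add_compl (fun z => ∫⁻ y, ENNReal.ofReal (V y) ∂(kpow P n z)) hO]
        have hcompl : ∫⁻ z in {x : 𝓧 | d₁ < V x}ᶜ,
            (∫⁻ y, ENNReal.ofReal (V y) ∂(kpow P n z)) ∂(P x)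
            ≤ ENNReal.ofReal (d₁ + (n : ℝ) * b) * P x {x : 𝓧 | d₁ < V x}ᶜ := by
          calc ∫⁻ z in {x : 𝓧 | d₁ < V x}ᶜ,
              (∫⁻ y, ENNReal.ofReal (V y) ∂(kpow P n z)) ∂(P x)
              ≤ ∫⁻ _z in {x : 𝓧 | d₁ < V x}ᶜ, ENNReal.ofReal (d₁ + (n : ℝ) * b) ∂(P x) := by
                refine setLIntegral_mono measurable_const fun z hz => ?_
                refine le_trans (hgrow n z) (ENNReal.ofReal_le_ofReal ?_)
                have hzle : V z ≤ d₁ := not_lt.mp hz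
                linarith
            _ = ENNReal.ofReal (d₁ + (n : ℝ) * b) * P x {x : 𝓧 | d₁ < V x}ᶜ :=
                setLIntegral_const _ _
        have hmain : ∫⁻ z in {x : 𝓧 | d₁ < V x},
            (∫⁻ y, ENNReal.ofReal (V y) ∂(kpow P n z)) ∂(P x)
            ≤ ENNReal.ofReal (V x + ((n : ℝ) + 1) * K) * subK P hO (n + 1) x univ
              + ENNReal.ofReal (d₁ + (n : ℝ) * b) * P x {x : 𝓧 | d₁ < V x} := by
          calc ∫⁻ z in {x : 𝓧 | d₁ < V x},
              (∫⁻ y, ENNReal.ofReal (V y) ∂(kpow P n z)) ∂(P x)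
              ≤ ∫⁻ z in {x : 𝓧 | d₁ < V x},
                  (ENNReal.ofReal (V z + (n : ℝ) * K) * subK P hO n z univ
                    + ENNReal.ofReal (d₁ + (n : ℝ) * b)) ∂(P x) :=
                setLIntegral_mono' hO fun z hz => ih z hz
            _ = (∫⁻ z in {x : 𝓧 | d₁ < V x},
                  ENNReal.ofReal (V z + (n : ℝ) * K) * subK P hO n z univ ∂(P x))
                  + ENNReal.ofReal (d₁ + (n : ℝ) * b) * P x {x : 𝓧 | d₁ < V x} := by
                rw [lintegral_add_right _ measurable_const, setLIntegral_const]
            _ ≤ ENNReal.ofReal (V x + ((n : ℝ) + 1) * K) * subK P hO (n + 1) x univ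
                  + ENNReal.ofReal (d₁ + (n : ℝ) * b) * P x {x : 𝓧 | d₁ < V x} := by
                refine add_le_add_left ?_ _
                calc ∫⁻ z in {x : 𝓧 | d₁ < V x},
                    ENNReal.ofReal (V z + (n : ℝ) * K) * subK P hO n z univ ∂(P x)
                    ≤ ∫⁻ z in {x : 𝓧 | d₁ < V x},
                        ENNReal.ofReal (V x + ((n : ℝ) + 1) * K) * subK P hO n z univ ∂(P x) := by
                      refine lintegral_mono_ae ?_
                      filter_upwards [ae_restrict_of_ae (hae x hx)] with z hz
                      exact mul_le_mul_left
                        (ENNReal.ofReal_le_ofReal (by nlinarith [hK])) _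
                  _ = ENNReal.ofReal (V x + ((n : ℝ) + 1) * K)
                        * ∫⁻ z in {x : 𝓧 | d₁ < V x}, subK P hO n z univ ∂(P x) :=
                      lintegral_const_mul _ (hrmeas n)
                  _ = ENNReal.ofReal (V x + ((n : ℝ) + 1) * K) * subK P hO (n + 1) x univ := by
                      rw [hrmass n x]
        refine le_trans (add_le_add hmain hcompl) ?_
        have huniv : P x univ = 1 := measure_univ
        rw [add_assoc, ← mul_add, measure_add_measure_compl hO, huniv, mul_one]
        exact add_le_add le_rfl (ENNReal.ofReal_le_ofReal (by nlinarith))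
  -- drift for the (1-α) power
  have hD : ∀ x : 𝓧, d₁ < V x →
      (∫⁻ y, ENNReal.ofReal (V y ^ (1 - α)) ∂(P x)) + ENNReal.ofReal c₁
        ≤ ENNReal.ofReal (V x ^ (1 - α)) := by
    intro x hx
    have hv1 : (1 : ℝ) ≤ V x := hV1 x
    have hv0 : (0 : ℝ) < V x := lt_of_lt_of_le one_pos hv1
    have hvw : (0 : ℝ) < V x ^ (1 - α) := Real.rpow_pos_of_pos hv0 _
    have hcv : c < V x ^ (1 - α) := hcd₁ _ hx
    have hvneg : (0 : ℝ) ≤ (1 - α) * V x ^ (-α) :=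
      mul_nonneg h1a.le (Real.rpow_nonneg hv0.le _)
    have h3 : V x ^ (-α) * V x = V x ^ (1 - α) := by
      have h := Real.rpow_add hv0 (-α) 1
      rw [Real.rpow_one] at h
      rw [show (1 : ℝ) - α = -α + 1 by ring, h]
    have h5 : V x ^ (-α) * V x ^ α = 1 := by
      rw [← Real.rpow_add hv0]
      norm_num
    have hpt : ∀ z : 𝓧, ENNReal.ofReal (V z ^ (1 - α))
        ≤ ENNReal.ofReal (α * V x ^ (1 - α))
          + ENNReal.ofReal ((1 - α) * V x ^ (-α)) * ENNReal.ofReal (V z) := by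
      intro z
      have hz0 : (0 : ℝ) ≤ V z := hVz0 z
      have hgm : (V z / V x) ^ (1 - α) * 1 ^ α ≤ (1 - α) * (V z / V x) + α * 1 :=
        Real.geom_mean_le_arith_mean2_weighted h1a.le hα0.le (by positivity) zero_le_one
          (by ring)
      rw [Real.one_rpow, mul_one, mul_one] at hgm
      have key : V z ^ (1 - α) ≤ α * V x ^ (1 - α) + (1 - α) * V x ^ (-α) * V z := by
        have h1 : V z ^ (1 - α) = V x ^ (1 - α) * (V z / V x) ^ (1 - α) := by
          rw [← Real.mul_rpow hv0.le (by positivity)]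
          congr 1
          field_simp
        calc V z ^ (1 - α) = V x ^ (1 - α) * (V z / V x) ^ (1 - α) := h1
          _ ≤ V x ^ (1 - α) * ((1 - α) * (V z / V x) + α) :=
              mul_le_mul_of_nonneg_left hgm hvw.le
          _ = α * V x ^ (1 - α) + (1 - α) * V x ^ (-α) * V z := by
              rw [← h3]
              field_simp
              ring
      calc ENNReal.ofReal (V z ^ (1 - α))
          ≤ ENNReal.ofReal (α * V x ^ (1 - α) + (1 - α) * V x ^ (-α) * V z) :=
            ENNReal.ofReal_le_ofReal key
        _ = _ := by
            rw [ENNReal.ofReal_add (by positivity) (mul_nonneg hvneg hz0),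
              ENNReal.ofReal_mul hvneg]
    have hPV : ∫⁻ y, ENNReal.ofReal (V y) ∂(P x) ≤ ENNReal.ofReal (V x - c * V x ^ α) := by
      refine le_trans (hPE x) (le_of_eq ?_)
      congr 1
      rw [Set.indicator_of_notMem
        (by simp only [mem_setOf_eq, not_le]; exact lt_of_le_of_lt hd₁d hx), add_zero]
    have h4 : V x ^ α * V x ^ (1 - α) = V x := by
      rw [← Real.rpow_add hv0]
      norm_num
    have hsub : (0 : ℝ) ≤ V x - c * V x ^ α := by
      nlinarith [Real.rpow_pos_of_pos hv0 α]
    have hc₁c : c₁ ≤ c := by rw [hc₁def]; nlinarith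
    calc (∫⁻ y, ENNReal.ofReal (V y ^ (1 - α)) ∂(P x)) + ENNReal.ofReal c₁
        ≤ (∫⁻ y, (ENNReal.ofReal (α * V x ^ (1 - α))
              + ENNReal.ofReal ((1 - α) * V x ^ (-α)) * ENNReal.ofReal (V y)) ∂(P x))
            + ENNReal.ofReal c₁ := add_le_add_left (lintegral_mono hpt) _
      _ = ENNReal.ofReal (α * V x ^ (1 - α))
            + ENNReal.ofReal ((1 - α) * V x ^ (-α)) * (∫⁻ y, ENNReal.ofReal (V y) ∂(P x))
            + ENNReal.ofReal c₁ := by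
          rw [lintegral_add_left measurable_const, lintegral_const, measure_univ, mul_one,
            lintegral_const_mul _ hgV]
      _ ≤ ENNReal.ofReal (α * V x ^ (1 - α))
            + ENNReal.ofReal ((1 - α) * V x ^ (-α)) * ENNReal.ofReal (V x - c * V x ^ α)
            + ENNReal.ofReal c₁ :=
          add_le_add_left (add_le_add_right (mul_le_mul_right hPV _) _) _
      _ = ENNReal.ofReal (α * V x ^ (1 - α) + (1 - α) * V x ^ (-α) * (V x - c * V x ^ α))
            + ENNReal.ofReal c₁ := by
          rw [← ENNReal.ofReal_mul hvneg,
            ← ENNReal.ofReal_add (by positivity) (mul_nonneg hvneg hsub)]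
      _ = ENNReal.ofReal (V x ^ (1 - α) - c₁) + ENNReal.ofReal c₁ := by
          have halg : α * V x ^ (1 - α) + (1 - α) * V x ^ (-α) * (V x - c * V x ^ α)
              = V x ^ (1 - α) - c₁ := by
            rw [hc₁def]
            linear_combination (1 - α) * h3 - c * (1 - α) * h5
          rw [halg]
      _ = ENNReal.ofReal (V x ^ (1 - α)) := by
          rw [← ENNReal.ofReal_add (by linarith) hc₁.le]
          congr 1
          ring
  -- survival mass facts
  have hr0 : ∀ z : 𝓧, subK P hO 0 z univ = 1 := fun z => by
    rw [show subK P hO 0 = Kernel.id from rfl, Kernel.id_apply]; simp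
  have hrmono : ∀ (n : ℕ) (x : 𝓧), subK P hO (n + 1) x univ ≤ subK P hO n x univ := by
    intro n
    induction n with
    | zero =>
        intro x
        rw [hrmass 0 x, hr0 x]
        calc ∫⁻ z in {x : 𝓧 | d₁ < V x}, subK P hO 0 z univ ∂(P x)
            = ∫⁻ _z in {x : 𝓧 | d₁ < V x}, 1 ∂(P x) := lintegral_congr fun z => hr0 z
          _ = P x {x : 𝓧 | d₁ < V x} := setLIntegral_one _
          _ ≤ 1 := prob_le_one
    | succ n ih =>
        intro x
        rw [hrmass (n + 1) x, hrmass n x]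
        exact setLIntegral_mono (hrmeas n) fun z _ => ih z
  have humeas : ∀ n : ℕ,
      Measurable fun z => ∫⁻ y, ENNReal.ofReal (V y ^ (1 - α)) ∂(subK P hO n z) := by
    intro n
    haveI := hrfin n
    exact hgU.lintegral_kernel
  have hu0 : ∀ z : 𝓧, ∫⁻ y, ENNReal.ofReal (V y ^ (1 - α)) ∂(subK P hO 0 z)
      = ENNReal.ofReal (V z ^ (1 - α)) := fun z => by
    rw [show subK P hO 0 = Kernel.id from rfl, Kernel.id_apply, lintegral_dirac' _ hgU]
  -- one-step supermartingale estimate for the subsampled chain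
  have hB' : ∀ (n : ℕ) (x : 𝓧), d₁ < V x →
      (∫⁻ y, ENNReal.ofReal (V y ^ (1 - α)) ∂(subK P hO (n + 1) x))
        + ENNReal.ofReal c₁ * subK P hO (n + 1) x univ
      ≤ ∫⁻ y, ENNReal.ofReal (V y ^ (1 - α)) ∂(subK P hO n x) := by
    intro n
    induction n with
    | zero =>
        intro x hx
        rw [hrfirstU 0 x, hrmass 0 x, hu0 x]
        calc (∫⁻ z in {x : 𝓧 | d₁ < V x},
              (∫⁻ y, ENNReal.ofReal (V y ^ (1 - α)) ∂(subK P hO 0 z)) ∂(P x))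
              + ENNReal.ofReal c₁ * ∫⁻ z in {x : 𝓧 | d₁ < V x}, subK P hO 0 z univ ∂(P x)
            = (∫⁻ z in {x : 𝓧 | d₁ < V x}, ENNReal.ofReal (V z ^ (1 - α)) ∂(P x))
              + ENNReal.ofReal c₁ * P x {x : 𝓧 | d₁ < V x} := by
              congr 1
              · exact lintegral_congr fun z => hu0 z
              · congr 1
                calc ∫⁻ z in {x : 𝓧 | d₁ < V x}, subK P hO 0 z univ ∂(P x)
                    = ∫⁻ _z in {x : 𝓧 | d₁ < V x}, 1 ∂(P x) := lintegral_congr fun z => hr0 z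
                  _ = P x {x : 𝓧 | d₁ < V x} := setLIntegral_one _
          _ ≤ (∫⁻ z, ENNReal.ofReal (V z ^ (1 - α)) ∂(P x)) + ENNReal.ofReal c₁ := by
              refine add_le_add (setLIntegral_le_lintegral _ _) ?_
              calc ENNReal.ofReal c₁ * P x {x : 𝓧 | d₁ < V x}
                  ≤ ENNReal.ofReal c₁ * 1 := mul_le_mul_right prob_le_one _
                _ = ENNReal.ofReal c₁ := mul_one _
          _ ≤ ENNReal.ofReal (V x ^ (1 - α)) := hD x hx
    | succ n ih =>
        intro x hx
        rw [hrfirstU (n + 1) x, hrfirstU n x, hrmass (n + 1) x]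
        calc (∫⁻ z in {x : 𝓧 | d₁ < V x},
              (∫⁻ y, ENNReal.ofReal (V y ^ (1 - α)) ∂(subK P hO (n + 1) z)) ∂(P x))
              + ENNReal.ofReal c₁
                * ∫⁻ z in {x : 𝓧 | d₁ < V x}, subK P hO (n + 1) z univ ∂(P x)
            = ∫⁻ z in {x : 𝓧 | d₁ < V x},
                ((∫⁻ y, ENNReal.ofReal (V y ^ (1 - α)) ∂(subK P hO (n + 1) z))
                  + ENNReal.ofReal c₁ * subK P hO (n + 1) z univ) ∂(P x) := by
              rw [lintegral_add_left (humeas (n + 1)),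
                lintegral_const_mul _ (hrmeas (n + 1))]
          _ ≤ ∫⁻ z in {x : 𝓧 | d₁ < V x},
                (∫⁻ y, ENNReal.ofReal (V y ^ (1 - α)) ∂(subK P hO n z)) ∂(P x) :=
              setLIntegral_mono' hO fun z hz => ih z hz
  -- telescoping
  have hT : ∀ (n : ℕ) (x : 𝓧), d₁ < V x →
      (∫⁻ y, ENNReal.ofReal (V y ^ (1 - α)) ∂(subK P hO n x))
        + ENNReal.ofReal c₁ * ∑ k ∈ Finset.range n, subK P hO (k + 1) x univ
      ≤ ENNReal.ofReal (V x ^ (1 - α)) := by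
    intro n
    induction n with
    | zero =>
        intro x hx
        rw [hu0 x]
        simp
    | succ n ih =>
        intro x hx
        rw [Finset.sum_range_succ]
        calc (∫⁻ y, ENNReal.ofReal (V y ^ (1 - α)) ∂(subK P hO (n + 1) x))
            + ENNReal.ofReal c₁
              * ((∑ k ∈ Finset.range n, subK P hO (k + 1) x univ)
                  + subK P hO (n + 1) x univ)
            = ((∫⁻ y, ENNReal.ofReal (V y ^ (1 - α)) ∂(subK P hO (n + 1) x))
                + ENNReal.ofReal c₁ * subK P hO (n + 1) x univ)
              + ENNReal.ofReal c₁ * ∑ k ∈ Finset.range n, subK P hO (k + 1) x univ := by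
              ring
          _ ≤ (∫⁻ y, ENNReal.ofReal (V y ^ (1 - α)) ∂(subK P hO n x))
              + ENNReal.ofReal c₁ * ∑ k ∈ Finset.range n, subK P hO (k + 1) x univ :=
              add_le_add_left (hB' n x hx) _
          _ ≤ ENNReal.ofReal (V x ^ (1 - α)) := ih x hx
  -- survival probability bound
  have hB : ∀ (n : ℕ) (x : 𝓧), d₁ < V x →
      (n : ℝ≥0∞) * subK P hO n x univ * ENNReal.ofReal c₁
        ≤ ENNReal.ofReal (V x ^ (1 - α)) := by
    intro n x hx
    have hant : Antitone fun m => subK P hO m x univ :=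
      antitone_nat_of_succ_le fun m => hrmono m x
    have hsum : (n : ℝ≥0∞) * subK P hO n x univ
        ≤ ∑ k ∈ Finset.range n, subK P hO (k + 1) x univ := by
      have h := Finset.card_nsmul_le_sum (Finset.range n)
        (fun k => subK P hO (k + 1) x univ) (subK P hO n x univ)
        (fun k hk => hant (Finset.mem_range.mp hk))
      simpa [Finset.card_range, nsmul_eq_mul] using h
    calc (n : ℝ≥0∞) * subK P hO n x univ * ENNReal.ofReal c₁
        ≤ (∑ k ∈ Finset.range n, subK P hO (k + 1) x univ) * ENNReal.ofReal c₁ :=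
          mul_le_mul_left hsum _
      _ = ENNReal.ofReal c₁ * ∑ k ∈ Finset.range n, subK P hO (k + 1) x univ := mul_comm _ _
      _ ≤ (∫⁻ y, ENNReal.ofReal (V y ^ (1 - α)) ∂(subK P hO n x))
            + ENNReal.ofReal c₁ * ∑ k ∈ Finset.range n, subK P hO (k + 1) x univ :=
          le_add_self
      _ ≤ ENNReal.ofReal (V x ^ (1 - α)) := hT n x hx
  -- conclusion
  refine ⟨d', hd'1, lam, hlam, β, ⟨hβpos, hβ1⟩, b', hlogβ, ?_⟩
  intro x
  by_cases hx : V x ≤ d'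
  · -- inside the sublevel set : one step
    have hF : tamingF lam (1 - α) d' (V x) = 1 := by rw [tamingF, if_pos hx]
    have hxmem : x ∈ {x' : 𝓧 | V x' ≤ d'} := hx
    rw [hF, show kpow P 1 = P.comp (kpow P 0) from rfl, show kpow P 0 = Kernel.id from rfl,
      Kernel.comp_id, Set.indicator_of_mem hxmem]
    refine le_trans (hPE x) (ENNReal.ofReal_le_ofReal ?_)
    have h1 : 0 ≤ c * V x ^ α := mul_nonneg hc.le (Real.rpow_nonneg (hVz0 x) _)
    have h2 := hindle x
    have h3 : (1 - β) * V x ≤ d' := by nlinarith [hV1 x, hx]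
    rw [hb'def]
    nlinarith
  · -- outside : many steps
    have hvx : d' < V x := not_le.mp hx
    have hd₁x : d₁ < V x := lt_of_le_of_lt hd'd₁ hvx
    have hvpos : (0 : ℝ) < V x := lt_of_lt_of_le one_pos (hV1 x)
    have hwpos : (0 : ℝ) < V x ^ (1 - α) := Real.rpow_pos_of_pos hvpos _
    have hF : tamingF lam (1 - α) d' (V x) = ⌈lam * V x ^ (1 - α)⌉₊ := by
      rw [tamingF, if_neg hx]
    have hxmem : x ∉ {x' : 𝓧 | V x' ≤ d'} := hx
    rw [hF, Set.indicator_of_notMem hxmem, add_zero]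
    have hlw : 0 < lam * V x ^ (1 - α) := mul_pos hlam hwpos
    have hnnat : 0 < ⌈lam * V x ^ (1 - α)⌉₊ := Nat.ceil_pos.mpr hlw
    have hnr : (0 : ℝ) < (⌈lam * V x ^ (1 - α)⌉₊ : ℝ) := by exact_mod_cast hnnat
    have hn0 : ((⌈lam * V x ^ (1 - α)⌉₊ : ℕ) : ℝ≥0∞) ≠ 0 := by
      exact_mod_cast hnnat.ne'
    have h2 := hB ⌈lam * V x ^ (1 - α)⌉₊ x hd₁x
    have h3 : subK P hO ⌈lam * V x ^ (1 - α)⌉₊ x univ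
        ≤ ENNReal.ofReal (V x ^ (1 - α) / (c₁ * ⌈lam * V x ^ (1 - α)⌉₊)) := by
      have hcn : (0 : ℝ) < c₁ * (⌈lam * V x ^ (1 - α)⌉₊ : ℝ) := mul_pos hc₁ hnr
      rw [ENNReal.ofReal_div_of_pos hcn, ENNReal.ofReal_mul hc₁.le, ENNReal.ofReal_natCast]
      rw [ENNReal.le_div_iff_mul_le
        (Or.inl (mul_ne_zero (ENNReal.ofReal_pos.mpr hc₁).ne' hn0))
        (Or.inl (ENNReal.mul_ne_top ENNReal.ofReal_ne_top (ENNReal.natCast_ne_top _)))]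
      calc subK P hO ⌈lam * V x ^ (1 - α)⌉₊ x univ
            * (ENNReal.ofReal c₁ * (⌈lam * V x ^ (1 - α)⌉₊ : ℝ≥0∞))
          = (⌈lam * V x ^ (1 - α)⌉₊ : ℝ≥0∞) * subK P hO ⌈lam * V x ^ (1 - α)⌉₊ x univ
            * ENNReal.ofReal c₁ := by ring
        _ ≤ ENNReal.ofReal (V x ^ (1 - α)) := h2
    have hnonneg1 : (0 : ℝ) ≤ V x + (⌈lam * V x ^ (1 - α)⌉₊ : ℝ) * K := by positivity
    have hnonneg2 : (0 : ℝ) ≤ V x ^ (1 - α) / (c₁ * ⌈lam * V x ^ (1 - α)⌉₊) := by positivity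
    calc ∫⁻ y, ENNReal.ofReal (V y) ∂(kpow P ⌈lam * V x ^ (1 - α)⌉₊ x)
        ≤ ENNReal.ofReal (V x + (⌈lam * V x ^ (1 - α)⌉₊ : ℝ) * K)
            * subK P hO ⌈lam * V x ^ (1 - α)⌉₊ x univ
          + ENNReal.ofReal (d₁ + (⌈lam * V x ^ (1 - α)⌉₊ : ℝ) * b) :=
          hA ⌈lam * V x ^ (1 - α)⌉₊ x hd₁x
      _ ≤ ENNReal.ofReal (V x + (⌈lam * V x ^ (1 - α)⌉₊ : ℝ) * K)
            * ENNReal.ofReal (V x ^ (1 - α) / (c₁ * ⌈lam * V x ^ (1 - α)⌉₊))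
          + ENNReal.ofReal (d₁ + (⌈lam * V x ^ (1 - α)⌉₊ : ℝ) * b) :=
          add_le_add_left (mul_le_mul_right h3 _) _
      _ = ENNReal.ofReal ((V x + (⌈lam * V x ^ (1 - α)⌉₊ : ℝ) * K)
            * (V x ^ (1 - α) / (c₁ * ⌈lam * V x ^ (1 - α)⌉₊))
            + (d₁ + (⌈lam * V x ^ (1 - α)⌉₊ : ℝ) * b)) := by
          rw [ENNReal.ofReal_add (mul_nonneg hnonneg1 hnonneg2)
            (by positivity), ENNReal.ofReal_mul hnonneg1]
      _ ≤ ENNReal.ofReal (β * V x) :=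
          ENNReal.ofReal_le_ofReal (hreal (V x) hvx)



/-- Theorem 21: a chain satisfying PE(V, c, α, b, C), with all sublevel
sets of `V` small and with bounded upward jumps of `V(X)` off `C`, is tame with respect
to `V`; indeed it is tamed by `F(z) = ⌈λ z^{1−α}⌉` (above a suitable level `d'`), with the
geometric rate `β` of the subsampled chain satisfying `log β < (1−α)^{-1}·log α`. -/
theorem stmt_10 {𝓧 : Type*} [MeasurableSpace 𝓧]
    (P : ProbabilityTheory.Kernel 𝓧 𝓧) [ProbabilityTheory.IsMarkovKernel P]
    (V : 𝓧 → ℝ) (hVmeas : Measurable V) (hV1 : ∀ x, 1 ≤ V x)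
    (c α b d : ℝ) (hα : α ∈ Set.Ioo (0 : ℝ) 1) (hc : 0 < c) (hb : 0 < b)
    (C : Set 𝓧) (hCdef : C = {x | V x ≤ d})
    (hPE : ∀ x, ∫⁻ y, ENNReal.ofReal (V y) ∂(P x)
      ≤ ENNReal.ofReal (V x - c * V x ^ α + C.indicator (fun _ => b) x))
    (hsmall : ∀ r : ℝ, IsSmallSet P {x | V x ≤ r})
    (hjumps : ∃ K : ℝ, 0 ≤ K ∧ ∀ x ∉ C, P x {y | V x + K < V y} = 0) :
    IsTame P V ∧
      ∃ d' : ℝ, 1 ≤ d' ∧ ∃ lam : ℝ, 0 < lam ∧ ∃ β ∈ Set.Ioo (0 : ℝ) 1, ∃ b' : ℝ,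
        Real.log β < (1 - α)⁻¹ * Real.log α ∧
        ∀ x, ∫⁻ y, ENNReal.ofReal (V y)
            ∂((kpow P (tamingF lam (1 - α) d' (V x))) x)
          ≤ ENNReal.ofReal (β * V x
              + Set.indicator {x' | V x' ≤ d'} (fun _ => b') x) := by
  subst hCdef
  obtain ⟨K, hK0, hjump⟩ := hjumps
  have hjump' : ∀ x, d < V x → P x {y | V x + K < V y} = 0 := by
    intro x hx
    refine hjump x ?_
    simp only [mem_setOf_eq, not_le]
    exact hx
  obtain ⟨d', hd'1, lam, hlam, β, hβ, b', hlog, hdrift⟩ :=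
    tame_main P V hVmeas hV1 c α b d hα hc hb hPE K hK0 hjump'
  have h1a : (0 : ℝ) < 1 - α := by linarith [hα.2]
  have htb : Real.log β < tameBound (1 - α) := by
    rw [tameBound, if_neg h1a.ne']
    have : (1 : ℝ) - (1 - α) = α := by ring
    rw [this]
    exact hlog
  refine ⟨⟨d', hd'1, hsmall d', lam, hlam, 1 - α, ⟨h1a.le, by linarith [hα.1]⟩,
    β, hβ, b', htb, hdrift⟩, d', hd'1, lam, hlam, β, hβ, b', hlog, hdrift⟩
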